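/- Let λ > 0, let V : ℕ → ℝ be bounded, and let r : ℕ → ℝ be nondecreasing with 0 ≤ r n ≤ 1 for all n. Assume for every m ∈ ℕ that V m ≥ (1/(1+λ)) · r m + (λ/(1+λ)) · V (m+1). Then for every N ∈ ℕ, r N ≤ ((1+λ)/λ)^N · V 0. -/

import Mathlib

open Filter

theorem discounted_upper_bound (lam : ℝ) (hlam : 0 < lam) (V r : ℕ → ℝ)
    (hV : ∃ C, ∀ n, |V n| ≤ C) (hmono : Monotone r)
    (h0 : ∀ n, 0 ≤ r n) (h1 : ∀ n, r n ≤ 1)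
    (h : ∀ m : ℕ, V m ≥ (1 / (1 + lam)) * r m + (lam / (1 + lam)) * V (m + 1)) :
    ∀ N : ℕ, r N ≤ ((1 + lam) / lam) ^ N * V 0 := by
  obtain ⟨C, hC⟩ := hV
  intro N
  set q := lam / (1 + lam) with hq
  have hpos : (0:ℝ) < 1 + lam := by linarith
  have hq0 : 0 ≤ q := div_nonneg hlam.le hpos.le
  have hq1 : q < 1 := (div_lt_one hpos).mpr (by linarith)
  have hqne : q ≠ 1 := ne_of_lt hq1
  -- key unrolled inequality
  have key : ∀ m, (∑ i ∈ Finset.range m, q ^ i * ((1 / (1 + lam)) * r i)) + q ^ m * V m ≤ V 0 := by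
    intro m
    induction m with
    | zero => simp
    | succ m ih =>
      rw [Finset.sum_range_succ]
      have hm := h m
      have hstep : q ^ m * ((1 / (1 + lam)) * r m + q * V (m + 1)) ≤ q ^ m * V m :=
        mul_le_mul_of_nonneg_left hm (pow_nonneg hq0 m)
      ring_nf at hstep ih ⊢
      linarith [hstep, ih]
  -- for m ≥ N, bound below
  have hNm : ∀ m, N ≤ m → r N * q ^ N - q ^ m * (1 + C) ≤ V 0 := by
    intro m hm
    have hsub : Finset.Ico N m ⊆ Finset.range m := by
      intro i hi
      simp only [Finset.mem_Ico] at hi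
      exact Finset.mem_range.mpr hi.2
    have h1' : ∑ i ∈ Finset.Ico N m, q ^ i * ((1 / (1 + lam)) * r N)
        ≤ ∑ i ∈ Finset.range m, q ^ i * ((1 / (1 + lam)) * r i) := by
      refine le_trans (Finset.sum_le_sum ?_) (Finset.sum_le_sum_of_subset_of_nonneg hsub ?_)
      · intro i hi
        simp only [Finset.mem_Ico] at hi
        have hqi : 0 ≤ q ^ i := pow_nonneg hq0 i
        have h1l : 0 ≤ 1 / (1 + lam) := by positivity
        exact mul_le_mul_of_nonneg_left
          (mul_le_mul_of_nonneg_left (hmono hi.1) h1l) hqi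
      · intro i _ _
        have hqi : 0 ≤ q ^ i := pow_nonneg hq0 i
        have h1l : 0 ≤ 1 / (1 + lam) := by positivity
        have := h0 i
        positivity
    have hgeom : ∑ i ∈ Finset.Ico N m, q ^ i = (q ^ m - q ^ N) / (q - 1) :=
      geom_sum_Ico hqne hm
    have hsum : ∑ i ∈ Finset.Ico N m, q ^ i * ((1 / (1 + lam)) * r N)
        = r N * (q ^ N - q ^ m) := by
      rw [← Finset.sum_mul, hgeom]
      have h1q : 1 / (1 + lam) = 1 - q := by
        rw [hq]; field_simp; ring
      rw [h1q, div_mul_eq_mul_div, div_eq_iff (sub_ne_zero.mpr hqne)]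
      ring
    have hkey := key m
    have hVm : -C ≤ V m := by
      have := hC m
      have := abs_le.mp this
      linarith [this.1]
    have hqm : 0 ≤ q ^ m := pow_nonneg hq0 m
    have hrN1 : r N ≤ 1 := h1 N
    nlinarith [hkey, h1', hsum, mul_le_mul_of_nonneg_left hVm hqm,
      mul_le_mul_of_nonneg_left hrN1 hqm]
  -- take the limit m → ∞
  have hlim : Tendsto (fun m : ℕ => r N * q ^ N - q ^ m * (1 + C)) atTop
      (nhds (r N * q ^ N)) := by
    have h0' : Tendsto (fun m : ℕ => q ^ m) atTop (nhds 0) :=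
      tendsto_pow_atTop_nhds_zero_of_lt_one hq0 hq1
    have := (h0'.mul_const (1 + C)).const_sub (r N * q ^ N)
    simpa using this
  have hfin : r N * q ^ N ≤ V 0 :=
    le_of_tendsto hlim (eventually_atTop.mpr ⟨N, fun m hm => hNm m hm⟩)
  -- conclude
  have hqNpos : 0 < q ^ N := pow_pos (div_pos hlam hpos) N
  have hinv : ((1 + lam) / lam) ^ N = (q ^ N)⁻¹ := by
    rw [hq, ← inv_pow]
    congr 1
    field_simp
  rw [hinv, ← div_eq_inv_mul, le_div_iff₀ hqNpos]
  linarith [hfin]
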